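/- Let X*_i, X*_j be nonnegative random variables whose joint survival is regularly varying: P(X*_i > x, X*_j > x) = L(x) x^{-κ} with L slowly varying and κ > 0. Let ε_i, ε_j be independent positive random variables, independent of (X*_i, X*_j), such that E[min(ε_i,ε_j)^{κ+δ}] < ∞ and E[max(ε_i,ε_j)^{κ+δ}] < ∞ for some δ > 0. Then P(ε_i X*_i > x, ε_j X*_j > x) is bounded between E[min(ε_i,ε_j)^κ]·L(x)x^{-κ}(1+o(1)) and E[max(ε_i,ε_j)^κ]·L(x)x^{-κ}(1+o(1)); in particular it is Θ(L(x)x^{-κ}) and the tail decay exponent κ is preserved under the multiplicative nugget. -/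

import Mathlib

open MeasureTheory ProbabilityTheory Real Filter

/-- Joint tail equivalence under the multiplicative nugget: if the joint survival of
    (Xᵢ*, Xⱼ*) is regularly varying, P(Xᵢ* > x, Xⱼ* > x) = L(x)x^{-κ}, and the positive
    nuggets εᵢ, εⱼ are independent of (Xᵢ*, Xⱼ*) with finite (κ+δ)-moments of their min
    and max, then P(εᵢXᵢ* > x, εⱼXⱼ* > x) is bounded between
    E[min(εᵢ,εⱼ)^κ]·L(x)x^{-κ}(1+o(1)) and E[max(εᵢ,εⱼ)^κ]·L(x)x^{-κ}(1+o(1)),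
    expressed via liminf/limsup of the ratio; hence the tail exponent κ is preserved. -/
private lemma iter_upper {T : ℝ → ℝ} {B x1 : ℝ} (hx1 : 0 < x1)
    (hdouble : ∀ y, x1 ≤ y → T y ≤ B * T (2 * y)) (hB : 0 ≤ B) :
    ∀ n : ℕ, ∀ y, x1 ≤ y → T y ≤ B ^ n * T (2 ^ n * y) := by
  intro n
  induction n with
  | zero => intro y _; simp
  | succ n ih =>
    intro y hy
    calc T y ≤ B * T (2 * y) := hdouble y hy
    _ ≤ B * (B ^ n * T (2 ^ n * (2 * y))) := by
        have := ih (2 * y) (by nlinarith)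
        exact mul_le_mul_of_nonneg_left this hB
    _ = B ^ (n+1) * T (2 ^ (n+1) * y) := by
        rw [show (2:ℝ) ^ n * (2 * y) = 2 ^ (n+1) * y by ring]; ring

private lemma iter_lower {T : ℝ → ℝ} {b x1 : ℝ} (hx1 : 0 < x1)
    (hdouble : ∀ y, x1 ≤ y → b * T y ≤ T (2 * y)) (hb : 0 ≤ b) (hTnn : ∀ y, 0 ≤ T y) :
    ∀ n : ℕ, ∀ y, x1 ≤ y → b ^ n * T y ≤ T (2 ^ n * y) := by
  intro n
  induction n with
  | zero => intro y _; simp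
  | succ n ih =>
    intro y hy
    calc b ^ (n+1) * T y = b * (b ^ n * T y) := by ring
    _ ≤ b * T (2 ^ n * y) := mul_le_mul_of_nonneg_left (ih y hy) hb
    _ ≤ T (2 * (2 ^ n * y)) := hdouble _ (le_trans hy (by nlinarith [pow_pos (by norm_num : (0:ℝ) < 2) n, one_le_pow₀ (by norm_num : (1:ℝ) ≤ 2) (n := n)]))
    _ = T (2 ^ (n+1) * y) := by rw [show (2:ℝ) * (2 ^ n * y) = 2 ^ (n+1) * y by ring]

private lemma ceil_pow (e : ℝ) (he : 1 ≤ e) :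
    e ≤ 2 ^ (⌈Real.logb 2 e⌉₊ : ℕ) ∧ (2:ℝ) ^ (⌈Real.logb 2 e⌉₊ : ℕ) ≤ 2 * e := by
  have h0 : 0 ≤ Real.logb 2 e := Real.logb_nonneg (by norm_num) he
  constructor
  · have h1 : Real.logb 2 e ≤ (⌈Real.logb 2 e⌉₊ : ℝ) := Nat.le_ceil _
    calc e = 2 ^ Real.logb 2 e := (Real.rpow_logb (by norm_num) (by norm_num) (by linarith)).symm
    _ ≤ 2 ^ ((⌈Real.logb 2 e⌉₊ : ℕ) : ℝ) := Real.rpow_le_rpow_of_exponent_le (by norm_num) h1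
    _ = 2 ^ (⌈Real.logb 2 e⌉₊ : ℕ) := by rw [Real.rpow_natCast]
  · have h2 : (⌈Real.logb 2 e⌉₊ : ℝ) < Real.logb 2 e + 1 := Nat.ceil_lt_add_one h0
    calc (2:ℝ) ^ (⌈Real.logb 2 e⌉₊ : ℕ) = 2 ^ ((⌈Real.logb 2 e⌉₊ : ℕ) : ℝ) := by
          rw [Real.rpow_natCast]
    _ ≤ 2 ^ (Real.logb 2 e + 1) := Real.rpow_le_rpow_of_exponent_le (by norm_num) h2.le
    _ = 2 * e := by
        rw [Real.rpow_add (by norm_num), Real.rpow_logb (by norm_num) (by norm_num) (by linarith)]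
        ring

private lemma rpow_pow (n : ℕ) (a : ℝ) : ((2:ℝ) ^ (a)) ^ n = ((2:ℝ) ^ n) ^ a := by
  rw [← Real.rpow_natCast ((2:ℝ) ^ a) n, ← Real.rpow_natCast (2:ℝ) n,
    ← Real.rpow_mul (by norm_num), ← Real.rpow_mul (by norm_num), mul_comm]

private lemma potter {T L : ℝ → ℝ} {κ δ : ℝ} (hκ : 0 < κ) (hδ : 0 < δ)
    (hanti : Antitone T) (hTnn : ∀ y, 0 ≤ T y) (hT1 : ∀ y, T y ≤ 1)
    (hT : ∀ x > 0, T x = L x * x ^ (-κ))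
    (hLpos : ∀ x > 0, 0 < L x)
    (hslow2 : Tendsto (fun x => L (2 * x) / L x) atTop (nhds 1)) :
    ∃ x1 ≥ 1, ∃ K > 0, ∀ x, x1 * x1 ≤ x → 0 < T x ∧
      ∀ e > 0, T (x / e) ≤ (1 + K * e ^ (κ + δ)) * T x := by
  -- choose x1 with the ratio bound
  have hη : (0:ℝ) < 1 - 2 ^ (-δ) := by
    have : (2:ℝ) ^ (-δ) < 2 ^ (0:ℝ) := Real.rpow_lt_rpow_of_exponent_lt (by norm_num) (by linarith)
    simp only [Real.rpow_zero] at this; linarith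
  obtain ⟨x1', hx1'⟩ := (Filter.eventually_atTop).1
    ((hslow2.eventually (Metric.ball_mem_nhds 1 hη)))
  set x1 : ℝ := max x1' 1 with hx1def
  have hx1ge1 : (1:ℝ) ≤ x1 := le_max_right _ _
  have hx1pos : (0:ℝ) < x1 := lt_of_lt_of_le one_pos hx1ge1
  have hratio : ∀ y, x1 ≤ y → (2:ℝ) ^ (-δ) ≤ L (2 * y) / L y := by
    intro y hy
    have h := hx1' y (le_trans (le_max_left _ _) hy)
    rw [Real.dist_eq, abs_lt] at h
    linarith [h.1]
  have hypos : ∀ y : ℝ, x1 ≤ y → (0:ℝ) < y := fun y hy => lt_of_lt_of_le hx1pos hy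
  -- basic positivity
  have hTpos : ∀ x, 0 < x → 0 < T x := by
    intro x hx
    rw [hT x hx]
    exact mul_pos (hLpos x hx) (Real.rpow_pos_of_pos hx _)
  -- doubling inequalities
  have key : ∀ y, x1 ≤ y → (2:ℝ)^(-δ) * L y ≤ L (2*y) := by
    intro y hy
    have h1 := hratio y hy
    have h2 := hLpos y (hypos y hy)
    exact (le_div_iff₀ h2).1 h1
  have hdup : ∀ y, x1 ≤ y → T y ≤ 2 ^ (κ + δ) * T (2 * y) := by
    intro y hy
    have hy0 := hypos y hy
    rw [hT y hy0, hT (2*y) (by linarith)]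
    have h2y : ((2:ℝ) * y) ^ (-κ) = 2 ^ (-κ) * y ^ (-κ) :=
      Real.mul_rpow (by norm_num) hy0.le
    rw [h2y]
    have hk := key y hy
    have hyk : (0:ℝ) < y ^ (-κ) := Real.rpow_pos_of_pos hy0 _
    have e1 : (2:ℝ) ^ (κ + δ) * (L (2*y) * (2 ^ (-κ) * y ^ (-κ)))
        = 2 ^ δ * L (2*y) * y ^ (-κ) := by
      rw [show (2:ℝ) ^ (κ + δ) * (L (2*y) * (2 ^ (-κ) * y ^ (-κ)))
          = (2 ^ (κ + δ) * 2 ^ (-κ)) * L (2*y) * y ^ (-κ) by ring,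
        ← Real.rpow_add (by norm_num)]
      ring_nf
    rw [e1]
    have h2d : (2:ℝ) ^ δ * ((2:ℝ)^(-δ) * L y) = L y := by
      rw [show (2:ℝ) ^ δ * ((2:ℝ)^(-δ) * L y) = (2 ^ δ * 2 ^ (-δ)) * L y by ring,
        ← Real.rpow_add (by norm_num)]
      simp
    have h2dpos : (0:ℝ) < 2 ^ δ := Real.rpow_pos_of_pos (by norm_num) δ
    have : L y ≤ 2 ^ δ * L (2*y) := by
      calc L y = 2 ^ δ * ((2:ℝ)^(-δ) * L y) := h2d.symm
      _ ≤ 2 ^ δ * L (2*y) := mul_le_mul_of_nonneg_left hk h2dpos.le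
    exact mul_le_mul_of_nonneg_right this hyk.le
  have hddown : ∀ y, x1 ≤ y → 2 ^ (-(κ + δ)) * T y ≤ T (2 * y) := by
    intro y hy
    have hy0 := hypos y hy
    rw [hT y hy0, hT (2*y) (by linarith)]
    have h2y : ((2:ℝ) * y) ^ (-κ) = 2 ^ (-κ) * y ^ (-κ) :=
      Real.mul_rpow (by norm_num) hy0.le
    rw [h2y]
    have hk := key y hy
    have hyk : (0:ℝ) < y ^ (-κ) := Real.rpow_pos_of_pos hy0 _
    have e1 : (2:ℝ) ^ (-(κ + δ)) * (L y * y ^ (-κ))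
        = 2 ^ (-κ) * ((2:ℝ)^(-δ) * L y) * y ^ (-κ) := by
      rw [show (-(κ+δ)) = (-κ) + (-δ) by ring, Real.rpow_add (by norm_num)]
      ring
    rw [e1]
    have hp : (0:ℝ) < 2 ^ (-κ) := Real.rpow_pos_of_pos (by norm_num) (-κ)
    calc (2:ℝ) ^ (-κ) * ((2:ℝ)^(-δ) * L y) * y ^ (-κ)
        = 2 ^ (-κ) * (((2:ℝ)^(-δ) * L y) * y ^ (-κ)) := by ring
    _ ≤ 2 ^ (-κ) * (L (2*y) * y ^ (-κ)) :=
        mul_le_mul_of_nonneg_left (mul_le_mul_of_nonneg_right hk hyk.le) hp.le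
    _ = L (2*y) * (2 ^ (-κ) * y ^ (-κ)) := by ring
  -- upper Potter bound
  have hBpos : (0:ℝ) < 2 ^ (κ + δ) := Real.rpow_pos_of_pos (by norm_num) _
  have hup : ∀ e, 1 ≤ e → ∀ x, e * x1 ≤ x →
      T (x / e) ≤ (2:ℝ) ^ (κ + δ) * e ^ (κ + δ) * T x := by
    intro e he x hx
    have hepos : (0:ℝ) < e := lt_of_lt_of_le one_pos he
    have hxe : x1 ≤ x / e := (le_div_iff₀ hepos).2 (by nlinarith)
    have hx0 : (0:ℝ) < x := lt_of_lt_of_le (by positivity) hx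
    set n := ⌈Real.logb 2 e⌉₊ with hn
    obtain ⟨hn1, hn2⟩ := ceil_pow e he
    have h1 : T (x / e) ≤ ((2:ℝ) ^ (κ+δ)) ^ n * T (2 ^ n * (x / e)) :=
      iter_upper hx1pos hdup hBpos.le n _ hxe
    have h2 : T (2 ^ n * (x / e)) ≤ T x := by
      apply hanti
      calc x = e * (x / e) := by field_simp
      _ ≤ 2 ^ n * (x / e) := mul_le_mul_of_nonneg_right hn1 (by positivity)
    have h3 : ((2:ℝ) ^ (κ+δ)) ^ n ≤ 2 ^ (κ+δ) * e ^ (κ+δ) := by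
      rw [rpow_pow n (κ+δ)]
      calc ((2:ℝ) ^ n) ^ (κ+δ) ≤ (2 * e) ^ (κ+δ) :=
        Real.rpow_le_rpow (by positivity) hn2 (by linarith)
      _ = 2 ^ (κ+δ) * e ^ (κ+δ) := Real.mul_rpow (by norm_num) (by linarith)
    calc T (x / e) ≤ ((2:ℝ) ^ (κ+δ)) ^ n * T (2 ^ n * (x / e)) := h1
    _ ≤ ((2:ℝ) ^ (κ+δ)) ^ n * T x := mul_le_mul_of_nonneg_left h2 (by positivity)
    _ ≤ 2 ^ (κ+δ) * e ^ (κ+δ) * T x := mul_le_mul_of_nonneg_right h3 (hTnn x)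
  -- lower bound
  set c : ℝ := T x1 * (2 / x1) ^ (-(κ+δ)) with hc
  have hcpos : 0 < c := mul_pos (hTpos x1 hx1pos) (Real.rpow_pos_of_pos (by positivity) _)
  have hlow : ∀ x, x1 ≤ x → c * x ^ (-(κ+δ)) ≤ T x := by
    intro x hx
    have hx0 : (0:ℝ) < x := hypos x hx
    have he' : 1 ≤ x / x1 := (le_div_iff₀ hx1pos).2 (by linarith)
    set n := ⌈Real.logb 2 (x / x1)⌉₊ with hn
    obtain ⟨hn1, hn2⟩ := ceil_pow _ he'
    have h1 : ((2:ℝ) ^ (-(κ+δ))) ^ n * T x1 ≤ T (2 ^ n * x1) :=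
      iter_lower hx1pos hddown (by positivity) hTnn n x1 le_rfl
    have h2 : T (2 ^ n * x1) ≤ T x := by
      apply hanti
      calc x = (x / x1) * x1 := by field_simp
      _ ≤ 2 ^ n * x1 := mul_le_mul_of_nonneg_right hn1 hx1pos.le
    have h3 : c * x ^ (-(κ+δ)) ≤ ((2:ℝ) ^ (-(κ+δ))) ^ n * T x1 := by
      rw [rpow_pow]
      have hmono : ((2:ℝ) * (x / x1)) ^ (-(κ+δ)) ≤ ((2:ℝ) ^ n) ^ (-(κ+δ)) :=
        Real.rpow_le_rpow_of_nonpos (by positivity) hn2 (by linarith)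
      have heq : c * x ^ (-(κ+δ)) = T x1 * ((2:ℝ) * (x / x1)) ^ (-(κ+δ)) := by
        rw [hc, show (2:ℝ) * (x / x1) = (2 / x1) * x by ring,
          Real.mul_rpow (by positivity) hx0.le]
        ring
      rw [heq]
      calc T x1 * ((2:ℝ) * (x / x1)) ^ (-(κ+δ)) ≤ T x1 * ((2:ℝ) ^ n) ^ (-(κ+δ)) :=
        mul_le_mul_of_nonneg_left hmono (hTnn x1)
      _ = ((2:ℝ) ^ n) ^ (-(κ+δ)) * T x1 := by ring
    linarith
  -- assemble
  refine ⟨x1, hx1ge1, 2 ^ (κ+δ) + x1 ^ (κ+δ) / c, by positivity, ?_⟩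
  intro x hx
  have hxx1 : x1 ≤ x := le_trans (by nlinarith) hx
  have hx0 : (0:ℝ) < x := hypos x hxx1
  refine ⟨hTpos x hx0, ?_⟩
  intro e he
  set K : ℝ := 2 ^ (κ+δ) + x1 ^ (κ+δ) / c with hK
  have hepp : (0:ℝ) < e ^ (κ+δ) := Real.rpow_pos_of_pos he _
  have hKpos : (0:ℝ) < K := by positivity
  rcases lt_or_ge e 1 with h1 | h1
  · have hTle : T (x / e) ≤ T x := by
      apply hanti
      rw [le_div_iff₀ he]
      nlinarith
    calc T (x / e) ≤ T x := hTle
    _ = 1 * T x := (one_mul _).symm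
    _ ≤ (1 + K * e ^ (κ+δ)) * T x :=
        mul_le_mul_of_nonneg_right (by linarith [(mul_pos hKpos hepp).le]) (hTnn x)
  rcases le_or_gt (e * x1) x with h2 | h2
  · have hm := hup e h1 x h2
    have h3 : (2:ℝ) ^ (κ+δ) ≤ K := by
      rw [hK]
      linarith [div_pos (Real.rpow_pos_of_pos hx1pos (κ+δ)) hcpos]
    calc T (x / e) ≤ 2 ^ (κ+δ) * e ^ (κ+δ) * T x := hm
    _ ≤ K * e ^ (κ+δ) * T x :=
        mul_le_mul_of_nonneg_right (mul_le_mul_of_nonneg_right h3 hepp.le) (hTnn x)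
    _ ≤ (1 + K * e ^ (κ+δ)) * T x := by
        rw [add_mul]; linarith [hTnn x]
  · have hTx := hlow x hxx1
    have he2 : x / x1 ≤ e := (div_le_iff₀ hx1pos).2 (by nlinarith)
    have h4 : (x / x1) ^ (κ+δ) ≤ e ^ (κ+δ) := Real.rpow_le_rpow (by positivity) he2 (by linarith)
    have e2 : (x / x1) ^ (κ+δ) = x ^ (κ+δ) / x1 ^ (κ+δ) := Real.div_rpow hx0.le hx1pos.le (κ+δ)
    have e3 : x ^ (κ+δ) * x ^ (-(κ+δ)) = 1 := by
      rw [← Real.rpow_add hx0, show κ + δ + -(κ + δ) = 0 by ring, Real.rpow_zero]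
    have hx1p : (0:ℝ) < x1 ^ (κ+δ) := Real.rpow_pos_of_pos hx1pos _
    have hcne : c ≠ 0 := ne_of_gt hcpos
    have hx1ne : x1 ^ (κ+δ) ≠ 0 := ne_of_gt hx1p
    have h5 : (1:ℝ) ≤ x1 ^ (κ+δ) / c * (x / x1) ^ (κ+δ) * (c * x ^ (-(κ+δ))) := by
      have heq1 : x1 ^ (κ+δ) / c * (x / x1) ^ (κ+δ) * (c * x ^ (-(κ+δ))) = 1 := by
        rw [e2]
        calc x1 ^ (κ+δ) / c * (x ^ (κ+δ) / x1 ^ (κ+δ)) * (c * x ^ (-(κ+δ)))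
            = (x ^ (κ+δ) * x ^ (-(κ+δ))) * ((x1 ^ (κ+δ) / x1 ^ (κ+δ)) * (c / c)) := by ring
        _ = 1 := by rw [e3, div_self hx1ne, div_self hcne]; ring
      linarith
    have h6 : x1 ^ (κ+δ) / c * (x / x1) ^ (κ+δ) * (c * x ^ (-(κ+δ)))
        ≤ x1 ^ (κ+δ) / c * e ^ (κ+δ) * T x := by
      have hxp : (0:ℝ) ≤ c * x ^ (-(κ+δ)) := by positivity
      have hd : (0:ℝ) ≤ x1 ^ (κ+δ) / c := by positivity
      calc x1 ^ (κ+δ) / c * (x / x1) ^ (κ+δ) * (c * x ^ (-(κ+δ)))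
          ≤ x1 ^ (κ+δ) / c * e ^ (κ+δ) * (c * x ^ (-(κ+δ))) := by
            apply mul_le_mul_of_nonneg_right _ hxp
            exact mul_le_mul_of_nonneg_left h4 hd
      _ ≤ x1 ^ (κ+δ) / c * e ^ (κ+δ) * T x :=
            mul_le_mul_of_nonneg_left hTx (by positivity)
    have h7 : x1 ^ (κ+δ) / c * e ^ (κ+δ) * T x ≤ K * e ^ (κ+δ) * T x := by
      apply mul_le_mul_of_nonneg_right _ (hTnn x)
      apply mul_le_mul_of_nonneg_right _ hepp.le
      rw [hK]; nlinarith
    calc T (x / e) ≤ 1 := hT1 _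
    _ ≤ K * e ^ (κ+δ) * T x := le_trans (le_trans h5 h6) h7
    _ ≤ (1 + K * e ^ (κ+δ)) * T x := by
        rw [add_mul]; linarith [hTnn x]

private lemma breiman {Ω : Type*} [MeasureSpace Ω] [IsProbabilityMeasure (ℙ : Measure Ω)]
    (E Y : Ω → ℝ) (hEm : Measurable E) (hYm : Measurable Y)
    (hEpos : ∀ ω, 0 < E ω)
    (hindep : IndepFun E Y ℙ) {κ δ : ℝ} (hκ : 0 < κ) (hδ : 0 < δ)
    {L : ℝ → ℝ} (hLpos : ∀ x > 0, 0 < L x)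
    (hslow : ∀ t > 0, Tendsto (fun x => L (t * x) / L x) atTop (nhds 1))
    (hT : ∀ x > 0, (ℙ {ω | Y ω > x}).toReal = L x * x ^ (-κ))
    (hmom : Integrable (fun ω => E ω ^ (κ + δ)) ℙ) :
    Tendsto (fun x => (ℙ {ω | E ω * Y ω > x}).toReal / (L x * x ^ (-κ))) atTop
      (nhds (∫ ω, E ω ^ κ ∂ℙ)) := by
  set T : ℝ → ℝ := fun z => (ℙ {ω | Y ω > z}).toReal with hTdef
  have hanti : Antitone T := by
    intro a b hab
    exact ENNReal.toReal_mono (measure_ne_top _ _)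
      (measure_mono (fun ω hω => lt_of_le_of_lt hab hω))
  have hTnn : ∀ y, 0 ≤ T y := fun y => ENNReal.toReal_nonneg
  have hT1 : ∀ y, T y ≤ 1 := fun y =>
    le_trans (ENNReal.toReal_mono ENNReal.one_ne_top prob_le_one) (by norm_num)
  -- representation
  have hrep : ∀ x : ℝ, (ℙ {ω | E ω * Y ω > x}).toReal = ∫ ω, T (x / E ω) ∂ℙ := by
    intro x
    have hmapeq := (indepFun_iff_map_prod_eq_prod_map_map hEm.aemeasurable hYm.aemeasurable).1
      hindep
    have hs : MeasurableSet {p : ℝ × ℝ | p.1 * p.2 > x} :=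
      measurableSet_lt measurable_const (measurable_fst.mul measurable_snd)
    set g : ℝ → ENNReal :=
      fun e => (Measure.map Y ℙ) (Prod.mk e ⁻¹' {p : ℝ × ℝ | p.1 * p.2 > x}) with hgdef
    have hgm : Measurable g := measurable_measure_prodMk_left hs
    have h1 : ℙ {ω | E ω * Y ω > x} = ∫⁻ ω, g (E ω) ∂ℙ := by
      have e1 : ℙ {ω | E ω * Y ω > x}
          = (Measure.map (fun ω => (E ω, Y ω)) ℙ) {p : ℝ × ℝ | p.1 * p.2 > x} :=
        (Measure.map_apply (hEm.prodMk hYm) hs).symm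
      rw [e1, hmapeq, Measure.prod_apply hs]
      exact lintegral_map hgm hEm
    have hslice : ∀ ω, (g (E ω)).toReal = T (x / E ω) := by
      intro ω
      have he := hEpos ω
      have hpre : Prod.mk (E ω) ⁻¹' {p : ℝ × ℝ | p.1 * p.2 > x} = Set.Ioi (x / E ω) := by
        ext y
        simp only [Set.mem_preimage, Set.mem_setOf_eq, Set.mem_Ioi, gt_iff_lt]
        rw [div_lt_iff₀ he, mul_comm]
      rw [hgdef]
      simp only [hpre]
      rw [Measure.map_apply hYm measurableSet_Ioi]
      rfl
    calc (ℙ {ω | E ω * Y ω > x}).toReal = (∫⁻ ω, g (E ω) ∂ℙ).toReal := by rw [h1]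
    _ = ∫ ω, (g (E ω)).toReal ∂ℙ := (integral_toReal ((hgm.comp hEm).aemeasurable)
        (ae_of_all _ fun ω => measure_lt_top _ _)).symm
    _ = ∫ ω, T (x / E ω) ∂ℙ := integral_congr_ae (ae_of_all _ hslice)
  -- Potter bounds
  obtain ⟨x1, hx1ge1, K, hKpos, hpot⟩ :=
    potter (T := T) (L := L) hκ hδ hanti hTnn hT1 hT hLpos (hslow 2 (by norm_num))
  have hx1pos : (0:ℝ) < x1 := lt_of_lt_of_le one_pos hx1ge1
  -- dominated convergence
  have hTm : Measurable T := hanti.measurable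
  have htend : Tendsto (fun x => ∫ ω, T (x / E ω) / T x ∂ℙ) atTop
      (nhds (∫ ω, E ω ^ κ ∂ℙ)) := by
    apply tendsto_integral_filter_of_dominated_convergence
      (bound := fun ω => 1 + K * E ω ^ (κ + δ))
    · exact Eventually.of_forall fun x =>
        ((hTm.comp (measurable_const.div hEm)).div_const (T x)).aestronglyMeasurable
    · filter_upwards [eventually_ge_atTop (x1 * x1)] with x hx
      apply ae_of_all
      intro ω
      obtain ⟨hTxpos, hb⟩ := hpot x hx
      have h2 := hb (E ω) (hEpos ω)
      rw [Real.norm_eq_abs, abs_of_nonneg (div_nonneg (hTnn _) hTxpos.le)]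
      rw [div_le_iff₀ hTxpos]
      exact h2
    · exact (integrable_const 1).add (hmom.const_mul K)
    · apply ae_of_all
      intro ω
      have he := hEpos ω
      have hmain : Tendsto (fun x => E ω ^ κ * (L ((E ω)⁻¹ * x) / L x)) atTop
          (nhds (E ω ^ κ * 1)) :=
        (hslow (E ω)⁻¹ (inv_pos.2 he)).const_mul _
      rw [mul_one] at hmain
      apply hmain.congr'
      filter_upwards [eventually_gt_atTop 0] with x hx0
      have hxe : 0 < x / E ω := div_pos hx0 he
      rw [hTdef]
      simp only
      rw [hT x hx0, hT (x / E ω) hxe]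
      have h1 : (x / E ω) ^ (-κ) = x ^ (-κ) / E ω ^ (-κ) := Real.div_rpow hx0.le he.le (-κ)
      have h2 : E ω ^ (-κ) = (E ω ^ κ)⁻¹ := Real.rpow_neg he.le κ
      have hLx : L x ≠ 0 := ne_of_gt (hLpos x hx0)
      have hxk : x ^ (-κ) ≠ 0 := ne_of_gt (Real.rpow_pos_of_pos hx0 _)
      have hek : E ω ^ κ ≠ 0 := ne_of_gt (Real.rpow_pos_of_pos he _)
      rw [show x / E ω = (E ω)⁻¹ * x by rw [div_eq_inv_mul]] at *
      rw [h1, h2]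
      field_simp
  -- conclude
  apply htend.congr'
  filter_upwards [eventually_ge_atTop (max (x1 * x1) 1)] with x hx
  have hx0 : (0:ℝ) < x := lt_of_lt_of_le one_pos (le_trans (le_max_right _ _) hx)
  obtain ⟨hTxpos, _⟩ := hpot x (le_trans (le_max_left _ _) hx)
  rw [← hT x hx0, hrep x, ← integral_div]

theorem stmt19 {Ω : Type*} [MeasureSpace Ω] [IsProbabilityMeasure (ℙ : Measure Ω)]
    (Xi Xj εi εj : Ω → ℝ)
    (hXim : Measurable Xi) (hXjm : Measurable Xj)
    (hεim : Measurable εi) (hεjm : Measurable εj)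
    (hXinn : ∀ ω, 0 ≤ Xi ω) (hXjnn : ∀ ω, 0 ≤ Xj ω)
    (hεipos : ∀ ω, 0 < εi ω) (hεjpos : ∀ ω, 0 < εj ω)
    (hindep : IndepFun (fun ω => (εi ω, εj ω)) (fun ω => (Xi ω, Xj ω)) ℙ)
    (κ : ℝ) (hκ : 0 < κ) (L : ℝ → ℝ) (hLpos : ∀ x > 0, 0 < L x)
    (hslow : ∀ t > 0, Tendsto (fun x => L (t * x) / L x) atTop (nhds 1))
    (hjoint : ∀ x > 0, (ℙ {ω | Xi ω > x ∧ Xj ω > x}).toReal = L x * x ^ (-κ))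
    (δ : ℝ) (hδ : 0 < δ)
    (hminmom : Integrable (fun ω => min (εi ω) (εj ω) ^ (κ + δ)) ℙ)
    (hmaxmom : Integrable (fun ω => max (εi ω) (εj ω) ^ (κ + δ)) ℙ) :
    (∫ ω, min (εi ω) (εj ω) ^ κ ∂ℙ)
        ≤ Filter.liminf
            (fun x => (ℙ {ω | εi ω * Xi ω > x ∧ εj ω * Xj ω > x}).toReal / (L x * x ^ (-κ)))
            atTop ∧
    Filter.limsup
        (fun x => (ℙ {ω | εi ω * Xi ω > x ∧ εj ω * Xj ω > x}).toReal / (L x * x ^ (-κ)))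
        atTop
      ≤ ∫ ω, max (εi ω) (εj ω) ^ κ ∂ℙ := by
  have hYm : Measurable (fun ω => min (Xi ω) (Xj ω)) := hXim.min hXjm
  have hEminm : Measurable (fun ω => min (εi ω) (εj ω)) := hεim.min hεjm
  have hEmaxm : Measurable (fun ω => max (εi ω) (εj ω)) := hεim.max hεjm
  have hEminpos : ∀ ω, 0 < min (εi ω) (εj ω) := fun ω => lt_min (hεipos ω) (hεjpos ω)
  have hEmaxpos : ∀ ω, 0 < max (εi ω) (εj ω) :=
    fun ω => lt_of_lt_of_le (hεipos ω) (le_max_left _ _)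
  have hindmin : IndepFun (fun ω => min (εi ω) (εj ω)) (fun ω => min (Xi ω) (Xj ω)) ℙ :=
    hindep.comp (measurable_fst.min measurable_snd) (measurable_fst.min measurable_snd)
  have hindmax : IndepFun (fun ω => max (εi ω) (εj ω)) (fun ω => min (Xi ω) (Xj ω)) ℙ :=
    hindep.comp (measurable_fst.max measurable_snd) (measurable_fst.min measurable_snd)
  have hTY : ∀ x > 0, (ℙ {ω | min (Xi ω) (Xj ω) > x}).toReal = L x * x ^ (-κ) := by
    intro x hx
    rw [show {ω | min (Xi ω) (Xj ω) > x} = {ω | Xi ω > x ∧ Xj ω > x} by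
      ext ω; simp only [Set.mem_setOf_eq, gt_iff_lt, lt_min_iff]]
    exact hjoint x hx
  have hlo := breiman _ _ hEminm hYm hEminpos hindmin hκ hδ hLpos hslow hTY hminmom
  have hhi := breiman _ _ hEmaxm hYm hEmaxpos hindmax hκ hδ hLpos hslow hTY hmaxmom
  -- event inclusions
  have hsub1 : ∀ x : ℝ, {ω | min (εi ω) (εj ω) * min (Xi ω) (Xj ω) > x}
      ⊆ {ω | εi ω * Xi ω > x ∧ εj ω * Xj ω > x} := by
    intro x ω hω
    simp only [Set.mem_setOf_eq, gt_iff_lt] at hω ⊢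
    have hXnn : 0 ≤ min (Xi ω) (Xj ω) := le_min (hXinn ω) (hXjnn ω)
    constructor
    · exact lt_of_lt_of_le hω
        (mul_le_mul (min_le_left _ _) (min_le_left _ _) hXnn (hεipos ω).le)
    · exact lt_of_lt_of_le hω
        (mul_le_mul (min_le_right _ _) (min_le_right _ _) hXnn (hεjpos ω).le)
  have hsub2 : ∀ x : ℝ, {ω | εi ω * Xi ω > x ∧ εj ω * Xj ω > x}
      ⊆ {ω | max (εi ω) (εj ω) * min (Xi ω) (Xj ω) > x} := by
    intro x ω hω
    simp only [Set.mem_setOf_eq, gt_iff_lt] at hω ⊢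
    rcases le_total (Xi ω) (Xj ω) with h | h
    · rw [min_eq_left h]
      exact lt_of_lt_of_le hω.1 (mul_le_mul_of_nonneg_right (le_max_left _ _) (hXinn ω))
    · rw [min_eq_right h]
      exact lt_of_lt_of_le hω.2 (mul_le_mul_of_nonneg_right (le_max_right _ _) (hXjnn ω))
  -- ratio inequalities, eventually
  have hden : ∀ᶠ x : ℝ in atTop, 0 < L x * x ^ (-κ) := by
    filter_upwards [eventually_gt_atTop 0] with x hx
    exact mul_pos (hLpos x hx) (Real.rpow_pos_of_pos hx _)
  have hr1 : ∀ᶠ x : ℝ in atTop,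
      (ℙ {ω | min (εi ω) (εj ω) * min (Xi ω) (Xj ω) > x}).toReal / (L x * x ^ (-κ))
      ≤ (ℙ {ω | εi ω * Xi ω > x ∧ εj ω * Xj ω > x}).toReal / (L x * x ^ (-κ)) := by
    filter_upwards [hden] with x hx
    gcongr
    · exact measure_ne_top _ _
    · exact fun h => hsub1 x h
  have hr2 : ∀ᶠ x : ℝ in atTop,
      (ℙ {ω | εi ω * Xi ω > x ∧ εj ω * Xj ω > x}).toReal / (L x * x ^ (-κ))
      ≤ (ℙ {ω | max (εi ω) (εj ω) * min (Xi ω) (Xj ω) > x}).toReal / (L x * x ^ (-κ)) := by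
    filter_upwards [hden] with x hx
    gcongr
    · exact measure_ne_top _ _
    · exact fun h => hsub2 x h
  have hrnn : ∀ᶠ x : ℝ in atTop,
      (0:ℝ) ≤ (ℙ {ω | εi ω * Xi ω > x ∧ εj ω * Xj ω > x}).toReal / (L x * x ^ (-κ)) := by
    filter_upwards [hden] with x hx
    exact div_nonneg ENNReal.toReal_nonneg hx.le
  have hub : ∀ᶠ x : ℝ in atTop,
      (ℙ {ω | εi ω * Xi ω > x ∧ εj ω * Xj ω > x}).toReal / (L x * x ^ (-κ))
      ≤ (∫ ω, max (εi ω) (εj ω) ^ κ ∂ℙ) + 1 := by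
    filter_upwards [hr2, hhi.eventually_le_const (lt_add_one _)] with x h1 h2
    exact le_trans h1 h2
  constructor
  · rw [← hlo.liminf_eq]
    exact Filter.liminf_le_liminf hr1 hlo.isBoundedUnder_ge
      (Filter.isCoboundedUnder_ge_of_eventually_le _ hub)
  · rw [← hhi.limsup_eq]
    exact Filter.limsup_le_limsup hr2
      (Filter.isCoboundedUnder_le_of_eventually_le _ hrnn) hhi.isBoundedUnder_le
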